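/- Let q ≥ 2 and d ≥ 3 be integers and let l_1 = 0, l_2, …, l_{d−1} ∈ ℤ_q with l_i − l_j a unit whenever i ≠ j. Let π be the ℤ_q-algebra homomorphism from the Laurent polynomial ring ℤ_q[x_1^{±1}, …, x_{d−1}^{±1}] to R_d(ℤ_q) determined by x_i ↦ t + l_i. Then π is surjective, and its kernel K is generated, as an additive group, by the elements x^{v}·((l_j − l_i) + x_i − x_j) where v ranges over ℤ^{d−1} (x^{v} denoting the monomial x_1^{v_1}⋯x_{d−1}^{v_{d−1}}) and i ≠ j range over 1, …, d−1; equivalently, K is the ideal generated by the finitely many elements (l_j − l_i) + x_i − x_j for i ≠ j. -/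

import Mathlib

open Polynomial

/-- The multiplicative set of `ℤ_q[t]` generated by the polynomials `t + l i`. -/
noncomputable def dlSub (q d : ℕ) (l : Fin (d-1) → ZMod q) : Submonoid (Polynomial (ZMod q)) :=
  Submonoid.closure {p | ∃ i : Fin (d-1), p = X + C (l i)}

/-- The ring `R_d(ℤ_q) = ℤ_q[t, (t+l_1)⁻¹, …, (t+l_{d-1})⁻¹]`, realized as the localization of
`ℤ_q[t]` at the multiplicative set generated by the `t + l i`. -/
abbrev Rd (q d : ℕ) (l : Fin (d-1) → ZMod q) := Localization (dlSub q d l)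

/-- The image of `t + l i` in `R_d(ℤ_q)`, as a unit. -/
noncomputable def tU (q d : ℕ) (l : Fin (d-1) → ZMod q) (i : Fin (d-1)) : (Rd q d l)ˣ :=
  (IsLocalization.map_units (M := dlSub q d l) (Rd q d l)
    ⟨X + C (l i), Submonoid.subset_closure ⟨i, rfl⟩⟩).unit

/-- The monomial `∏ i (t + l i) ^ (v i)`, as a unit of `R_d(ℤ_q)`. -/
noncomputable def monU (q d : ℕ) (l : Fin (d-1) → ZMod q) (v : Fin (d-1) → ℤ) : (Rd q d l)ˣ :=
  ∏ i, tU q d l i ^ (v i)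

/-- Monomials as a homomorphism from `ℤ^(d-1)` to the units of `R_d(ℤ_q)`. -/
noncomputable def monHom (q d : ℕ) (l : Fin (d-1) → ZMod q) :
    Multiplicative (Fin (d-1) → ℤ) →* (Rd q d l)ˣ where
  toFun v := monU q d l (Multiplicative.toAdd v)
  map_one' := by simp [monU]
  map_mul' v w := by
    simp only [monU, toAdd_mul, Pi.add_apply, zpow_add, Finset.prod_mul_distrib]

/-- Conversion of additive automorphisms to multiplicative automorphisms of the
corresponding multiplicative group. -/
def addAutToMulAut (R : Type*) [AddCommGroup R] :
    Multiplicative (AddAut R) →* MulAut (Multiplicative R) where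
  toFun e := AddEquiv.toMultiplicative (Multiplicative.toAdd e)
  map_one' := rfl
  map_mul' _ _ := rfl

/-- The action of `ℤ^(d-1)` on (the additive group of) `R_d(ℤ_q)`, where `v` acts by
multiplication by the unit `∏ i (t + l i) ^ (v i)`. -/
noncomputable def dlAct (q d : ℕ) (l : Fin (d-1) → ZMod q) :
    Multiplicative (Fin (d-1) → ℤ) →* MulAut (Multiplicative (Rd q d l)) :=
  (addAutToMulAut (Rd q d l)).comp
    ((DistribMulAction.toAddAut (Rd q d l)ˣ (Rd q d l)).comp (monHom q d l))

/-- The Diestel–Leader group `Γ_d(q) = R_d(ℤ_q) ⋊ ℤ^(d-1)`. -/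
abbrev DLGroup (q d : ℕ) (l : Fin (d-1) → ZMod q) :=
  Multiplicative (Rd q d l) ⋊[dlAct q d l] Multiplicative (Fin (d-1) → ℤ)

/-- The Laurent polynomial ring `ℤ_q[x_1^{±1}, …, x_{d-1}^{±1}]`, i.e. the group algebra
of `ℤ^(d-1)` over `ℤ_q`. -/
abbrev dlLaurent (q d : ℕ) := AddMonoidAlgebra (ZMod q) (Fin (d-1) → ℤ)

/-- The `ℤ_q`-algebra homomorphism `π` from the Laurent polynomial ring to `R_d(ℤ_q)`
determined by `x_i ↦ t + l_i` (so the monomial `x^v` is sent to `∏ i (t+l_i)^(v i)`). -/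
noncomputable def dlPi (q d : ℕ) (l : Fin (d-1) → ZMod q) :
    dlLaurent q d →ₐ[ZMod q] Rd q d l :=
  (AddMonoidAlgebra.lift (ZMod q) (Rd q d l) (Fin (d-1) → ℤ))
    ((Units.coeHom (Rd q d l)).comp (monHom q d l))

section DLAux

open AddMonoidAlgebra

variable (q d : ℕ) (l : Fin (d-1) → ZMod q)

/-- The units `x^v` of the Laurent polynomial ring, as a monoid hom. -/
noncomputable def lUnit : Multiplicative (Fin (d-1) → ℤ) →* (dlLaurent q d)ˣ where
  toFun v := ⟨AddMonoidAlgebra.single v.toAdd 1, AddMonoidAlgebra.single (-v.toAdd) 1,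
    by rw [AddMonoidAlgebra.single_mul_single, mul_one, add_neg_cancel,
      ← AddMonoidAlgebra.one_def],
    by rw [AddMonoidAlgebra.single_mul_single, mul_one, neg_add_cancel,
      ← AddMonoidAlgebra.one_def]⟩
  map_one' := Units.ext (by simp [← AddMonoidAlgebra.one_def])
  map_mul' a b := Units.ext (by
    simp [AddMonoidAlgebra.single_mul_single])

lemma lUnit_val (v : Fin (d-1) → ℤ) :
    ((lUnit q d (Multiplicative.ofAdd v) : (dlLaurent q d)ˣ) : dlLaurent q d)
      = AddMonoidAlgebra.single v 1 := rfl

lemma dlPi_single (v : Fin (d-1) → ℤ) (c : ZMod q) :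
    dlPi q d l (AddMonoidAlgebra.single v c)
      = c • ((monU q d l v : (Rd q d l)ˣ) : Rd q d l) := by
  rw [dlPi, AddMonoidAlgebra.lift_single]
  rfl

lemma tU_val (i : Fin (d-1)) :
    ((tU q d l i : (Rd q d l)ˣ) : Rd q d l)
      = algebraMap (Polynomial (ZMod q)) (Rd q d l) (X + C (l i)) :=
  IsUnit.unit_spec _

lemma monU_single (i : Fin (d-1)) : monU q d l (Pi.single i 1) = tU q d l i := by
  rw [monU, Finset.prod_eq_single i]
  · rw [Pi.single_eq_same, zpow_one]
  · intro b _ hb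
    rw [Pi.single_eq_of_ne hb, zpow_zero]
  · intro h; exact absurd (Finset.mem_univ i) h

lemma monU_zero : monU q d l 0 = 1 := by
  rw [monU]; simp

lemma monU_eq_prod (v : Fin (d-1) → ℤ) :
    monU q d l v = ∏ i, (tU q d l i) ^ (v i) := rfl

lemma monomial_sum_single (v : Fin (d-1) → ℤ) :
    (Multiplicative.ofAdd v : Multiplicative (Fin (d-1) → ℤ))
      = ∏ i, (Multiplicative.ofAdd (Pi.single i 1 : Fin (d-1) → ℤ)) ^ (v i) := by
  have : v = ∑ i, (v i) • (Pi.single i 1 : Fin (d-1) → ℤ) := by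
    funext j
    simp [Pi.single_apply, Finset.sum_apply]
  conv_lhs => rw [this]
  rw [ofAdd_sum]
  refine Finset.prod_congr rfl fun i _ => ?_
  rw [ofAdd_zsmul]

end DLAux

section DLAux2

open AddMonoidAlgebra

variable (q d : ℕ) (l : Fin (d-1) → ZMod q)

lemma monHom_ofAdd (v : Fin (d-1) → ℤ) :
    monHom q d l (Multiplicative.ofAdd v) = monU q d l v := rfl

lemma monU_zsmul (c : ℤ) (v : Fin (d-1) → ℤ) :
    monU q d l (c • v) = (monU q d l v) ^ c := by
  rw [← monHom_ofAdd, ← monHom_ofAdd, ofAdd_zsmul, map_zpow]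

lemma monU_neg (v : Fin (d-1) → ℤ) : monU q d l (-v) = (monU q d l v)⁻¹ := by
  rw [← monHom_ofAdd, ← monHom_ofAdd, ofAdd_neg, map_inv]

lemma smul_one_Rd (c : ZMod q) :
    c • (1 : Rd q d l) = algebraMap (Polynomial (ZMod q)) (Rd q d l) (C c) := by
  rw [Algebra.smul_def, mul_one,
    IsScalarTower.algebraMap_apply (ZMod q) (Polynomial (ZMod q)) (Rd q d l),
    Polynomial.algebraMap_eq]

lemma pi_single_eq_zsmul (i0 : Fin (d-1)) (n : ℤ) :
    (Pi.single i0 n : Fin (d-1) → ℤ) = n • (Pi.single i0 1 : Fin (d-1) → ℤ) := by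
  funext j
  by_cases h : j = i0
  · subst h; simp
  · simp [Pi.single_eq_of_ne h]

lemma exists_preimage_algebraMap (i0 : Fin (d-1)) (hl0 : l i0 = 0) (p : Polynomial (ZMod q)) :
    ∃ g, dlPi q d l g = algebraMap (Polynomial (ZMod q)) (Rd q d l) p := by
  induction p using Polynomial.induction_on' with
  | add p r hp hr =>
    obtain ⟨g1, h1⟩ := hp; obtain ⟨g2, h2⟩ := hr
    exact ⟨g1 + g2, by rw [map_add, h1, h2, map_add]⟩
  | monomial n a =>
    refine ⟨AddMonoidAlgebra.single (Pi.single i0 (n : ℤ)) a, ?_⟩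
    rw [dlPi_single, pi_single_eq_zsmul, monU_zsmul, monU_single, zpow_natCast,
      Units.val_pow_eq_pow_val, tU_val, hl0, map_zero, add_zero,
      ← map_pow, Algebra.smul_def,
      IsScalarTower.algebraMap_apply (ZMod q) (Polynomial (ZMod q)) (Rd q d l),
      Polynomial.algebraMap_eq, ← map_mul, C_mul_X_pow_eq_monomial]

lemma exists_preimage_inv (s : Polynomial (ZMod q)) (hs : s ∈ dlSub q d l) :
    ∃ g, dlPi q d l g * algebraMap (Polynomial (ZMod q)) (Rd q d l) s = 1 := by
  induction hs using Submonoid.closure_induction with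
  | mem p hp =>
    obtain ⟨i, rfl⟩ := hp
    refine ⟨AddMonoidAlgebra.single (-(Pi.single i 1)) 1, ?_⟩
    rw [dlPi_single, one_smul, monU_neg, monU_single, ← tU_val]
    exact Units.inv_mul _
  | one => exact ⟨1, by simp⟩
  | mul a b ha hb hia hib =>
    obtain ⟨ga, hga⟩ := hia; obtain ⟨gb, hgb⟩ := hib
    exact ⟨ga * gb, by rw [map_mul, map_mul, mul_mul_mul_comm, hga, hgb, mul_one]⟩

lemma dlPi_surj (i0 : Fin (d-1)) (hl0 : l i0 = 0) : Function.Surjective (dlPi q d l) := by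
  intro z
  obtain ⟨⟨f, s⟩, rfl⟩ := IsLocalization.mk'_surjective (dlSub q d l) z
  obtain ⟨gf, hgf⟩ := exists_preimage_algebraMap q d l i0 hl0 f
  obtain ⟨gs, hgs⟩ := exists_preimage_inv q d l s s.2
  refine ⟨gf * gs, ?_⟩
  rw [map_mul, hgf, ← IsLocalization.mk'_spec (Rd q d l) f s, mul_assoc,
    mul_comm (algebraMap (Polynomial (ZMod q)) (Rd q d l) ↑s), hgs, mul_one]

end DLAux2

section DLAux3

open AddMonoidAlgebra

/-- The generating set of the kernel ideal. -/
def dlGen (q d : ℕ) (l : Fin (d-1) → ZMod q) : Set (dlLaurent q d) :=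
  {x : dlLaurent q d | ∃ i j : Fin (d-1), i ≠ j ∧
    x = AddMonoidAlgebra.single 0 (l j - l i)
        + AddMonoidAlgebra.single (Pi.single i 1) 1
        - AddMonoidAlgebra.single (Pi.single j 1) 1}

variable (q d : ℕ) (l : Fin (d-1) → ZMod q)

lemma dlPi_gen_eq_zero (i j : Fin (d-1)) :
    dlPi q d l (AddMonoidAlgebra.single 0 (l j - l i)
        + AddMonoidAlgebra.single (Pi.single i 1) 1
        - AddMonoidAlgebra.single (Pi.single j 1) 1) = 0 := by
  rw [map_sub, map_add, dlPi_single, dlPi_single, dlPi_single, one_smul, one_smul,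
    monU_zero, Units.val_one, monU_single, monU_single, tU_val, tU_val, smul_one_Rd,
    ← map_add, ← map_sub]
  have : C (l j - l i) + (X + C (l i)) - (X + C (l j)) = 0 := by
    rw [map_sub]; ring
  rw [this, map_zero]

lemma span_dlGen_le_ker : Ideal.span (dlGen q d l) ≤ RingHom.ker (dlPi q d l) := by
  rw [Ideal.span_le]
  rintro x ⟨i, j, hij, rfl⟩
  exact dlPi_gen_eq_zero q d l i j

lemma algebraMap_zmod_laurent (c : ZMod q) :
    algebraMap (ZMod q) (dlLaurent q d) c = AddMonoidAlgebra.single 0 c := by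
  rw [AddMonoidAlgebra.coe_algebraMap]
  simp

lemma ker_le_span_dlGen (i0 : Fin (d-1)) (hl0 : l i0 = 0) :
    RingHom.ker (dlPi q d l) ≤ Ideal.span (dlGen q d l) := by
  set K : Ideal (dlLaurent q d) := Ideal.span (dlGen q d l) with hK
  set mkK := Ideal.Quotient.mk K with hmkK
  set φ : Polynomial (ZMod q) →ₐ[ZMod q] (dlLaurent q d ⧸ K) :=
    Polynomial.aeval (mkK (AddMonoidAlgebra.single (Pi.single i0 1) 1)) with hφ
  have halg : ∀ c : ZMod q, algebraMap (ZMod q) (dlLaurent q d ⧸ K) c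
      = mkK (AddMonoidAlgebra.single 0 c) := by
    intro c
    rw [IsScalarTower.algebraMap_apply (ZMod q) (dlLaurent q d) (dlLaurent q d ⧸ K),
      Ideal.Quotient.algebraMap_eq, algebraMap_zmod_laurent]
  have hgen : ∀ i, φ (X + C (l i)) = mkK (AddMonoidAlgebra.single (Pi.single i 1) 1) := by
    intro i
    rw [map_add, Polynomial.aeval_X, Polynomial.aeval_C, halg]
    by_cases h : i = i0
    · subst h
      rw [hl0]
      simp
    · rw [← map_add, eq_comm, Ideal.Quotient.eq]
      have hx : ((AddMonoidAlgebra.single 0 (l i - l i0)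
          + AddMonoidAlgebra.single (Pi.single i0 1) 1
          - AddMonoidAlgebra.single (Pi.single i 1) 1 : dlLaurent q d)) ∈ K :=
        Ideal.subset_span ⟨i0, i, fun he => h he.symm, rfl⟩
      have he : ((AddMonoidAlgebra.single (Pi.single i 1) 1
          - (AddMonoidAlgebra.single (Pi.single i0 1) 1 + AddMonoidAlgebra.single 0 (l i))
          : dlLaurent q d))
          = -(AddMonoidAlgebra.single 0 (l i - l i0)
            + AddMonoidAlgebra.single (Pi.single i0 1) 1
            - AddMonoidAlgebra.single (Pi.single i 1) 1) := by
        rw [hl0, sub_zero]; ring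
      rw [he]
      exact K.neg_mem hx
  have hu : ∀ y : dlSub q d l, IsUnit (φ.toRingHom y) := by
    rintro ⟨y, hy⟩
    induction hy using Submonoid.closure_induction with
    | mem p hp =>
      obtain ⟨i, rfl⟩ := hp
      show IsUnit (φ (X + C (l i)))
      rw [hgen i]
      exact ⟨Units.map mkK.toMonoidHom (lUnit q d (Multiplicative.ofAdd (Pi.single i 1))),
        by rw [Units.coe_map, lUnit_val]; rfl⟩
    | one => show IsUnit (φ 1); rw [map_one]; exact isUnit_one
    | mul a b ha hb hia hib =>
      show IsUnit (φ (a * b))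
      rw [map_mul]; exact hia.mul hib
  set ψ : Rd q d l →+* dlLaurent q d ⧸ K := IsLocalization.lift hu with hψ
  have hgen2 : ∀ i : Fin (d-1),
      Units.map ψ.toMonoidHom (monHom q d l (Multiplicative.ofAdd (Pi.single i 1)))
        = Units.map mkK.toMonoidHom (lUnit q d (Multiplicative.ofAdd (Pi.single i 1))) := by
    intro i
    refine Units.ext ?_
    rw [Units.coe_map, Units.coe_map, lUnit_val, monHom_ofAdd, monU_single]
    show ψ ((tU q d l i : (Rd q d l)ˣ) : Rd q d l) = _
    rw [tU_val, hψ, IsLocalization.lift_eq]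
    exact hgen i
  have hFG : ∀ w : Multiplicative (Fin (d-1) → ℤ),
      Units.map ψ.toMonoidHom (monHom q d l w)
        = Units.map mkK.toMonoidHom (lUnit q d w) := by
    intro w
    have hw : w = ∏ i, (Multiplicative.ofAdd (Pi.single i 1 : Fin (d-1) → ℤ)) ^ (w.toAdd i) := by
      conv_lhs => rw [← ofAdd_toAdd w]
      exact monomial_sum_single d w.toAdd
    rw [hw]
    rw [map_prod, map_prod, map_prod, map_prod]
    refine Finset.prod_congr rfl fun i _ => ?_
    rw [map_zpow, map_zpow, map_zpow, map_zpow, hgen2]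
  have key : ψ.comp (dlPi q d l).toRingHom = mkK := by
    apply AddMonoidAlgebra.ringHom_ext
    · intro b
      show ψ (dlPi q d l (AddMonoidAlgebra.single 0 b)) = _
      rw [dlPi_single, monU_zero, Units.val_one, smul_one_Rd, hψ, IsLocalization.lift_eq]
      show φ (C b) = _
      rw [Polynomial.aeval_C, halg]
    · intro v
      show ψ (dlPi q d l (AddMonoidAlgebra.single v 1)) = _
      rw [dlPi_single, one_smul]
      calc ψ ((monU q d l v : (Rd q d l)ˣ) : Rd q d l)
          = ((Units.map ψ.toMonoidHom (monU q d l v) : (dlLaurent q d ⧸ K)ˣ)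
              : dlLaurent q d ⧸ K) := (Units.coe_map _ _).symm
        _ = ((Units.map mkK.toMonoidHom (lUnit q d (Multiplicative.ofAdd v))
              : (dlLaurent q d ⧸ K)ˣ) : dlLaurent q d ⧸ K) := by
            rw [← monHom_ofAdd, hFG]
        _ = mkK (AddMonoidAlgebra.single v 1) := by rw [Units.coe_map, lUnit_val]; rfl
  intro a ha
  rw [RingHom.mem_ker] at ha
  have h2 := RingHom.congr_fun key a
  rw [RingHom.comp_apply] at h2
  have h3 : (dlPi q d l).toRingHom a = 0 := ha
  rw [h3, map_zero] at h2
  exact Ideal.Quotient.eq_zero_iff_mem.mp h2.symm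

end DLAux3

section DLAux4

open AddMonoidAlgebra

/-- The generating set of the kernel as an additive group. -/
def dlGenV (q d : ℕ) (l : Fin (d-1) → ZMod q) : Set (dlLaurent q d) :=
  {x : dlLaurent q d | ∃ (v : Fin (d-1) → ℤ) (i j : Fin (d-1)), i ≠ j ∧
    x = AddMonoidAlgebra.single v 1 *
      (AddMonoidAlgebra.single 0 (l j - l i)
        + AddMonoidAlgebra.single (Pi.single i 1) 1
        - AddMonoidAlgebra.single (Pi.single j 1) 1)}

variable (q d : ℕ) (l : Fin (d-1) → ZMod q)

lemma smul_mem_closure_dlGenV (c : ZMod q) (x : dlLaurent q d)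
    (hx : x ∈ AddSubgroup.closure (dlGenV q d l)) :
    c • x ∈ AddSubgroup.closure (dlGenV q d l) := by
  have h1 : ((ZMod.cast c : ℤ) : ZMod q) = c := ZMod.intCast_zmod_cast c
  have h2 : c • x = (ZMod.cast c : ℤ) • x := by
    rw [← Int.cast_smul_eq_zsmul (ZMod q), h1]
  rw [h2]
  exact AddSubgroup.zsmul_mem _ hx _

lemma mul_mem_closure_dlGenV (a x : dlLaurent q d)
    (hx : x ∈ AddSubgroup.closure (dlGenV q d l)) :
    a * x ∈ AddSubgroup.closure (dlGenV q d l) := by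
  induction hx using AddSubgroup.closure_induction with
  | mem y hy =>
    obtain ⟨v, i, j, hij, rfl⟩ := hy
    set r : dlLaurent q d := AddMonoidAlgebra.single 0 (l j - l i)
        + AddMonoidAlgebra.single (Pi.single i 1) 1
        - AddMonoidAlgebra.single (Pi.single j 1) 1 with hr
    have hsum : a * (AddMonoidAlgebra.single v 1 * r)
        = a.coeff.sum fun w c => AddMonoidAlgebra.single w c * (AddMonoidAlgebra.single v 1 * r) := by
      conv_lhs => rw [← AddMonoidAlgebra.sum_coeff_single a]
      exact Finsupp.sum_mul _ _
    rw [hsum]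
    refine AddSubgroup.sum_mem _ fun w _ => ?_
    have hterm : AddMonoidAlgebra.single w (a.coeff w) * (AddMonoidAlgebra.single v 1 * r)
        = (a.coeff w) • (AddMonoidAlgebra.single (w + v) 1 * r) := by
      rw [← mul_assoc, AddMonoidAlgebra.single_mul_single, mul_one, ← smul_mul_assoc,
        AddMonoidAlgebra.smul_single', mul_one]
    show AddMonoidAlgebra.single w (a.coeff w) * (AddMonoidAlgebra.single v 1 * r)
        ∈ AddSubgroup.closure (dlGenV q d l)
    rw [hterm]
    exact smul_mem_closure_dlGenV q d l _ _
      (AddSubgroup.subset_closure ⟨w + v, i, j, hij, rfl⟩)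
  | zero => simpa using (AddSubgroup.closure (dlGenV q d l)).zero_mem
  | add x y hxm hym ihx ihy => rw [mul_add]; exact AddSubgroup.add_mem _ ihx ihy
  | neg x hxm ihx => rw [mul_neg]; exact AddSubgroup.neg_mem _ ihx

lemma closure_dlGenV_eq_span :
    AddSubgroup.closure (dlGenV q d l) = (Ideal.span (dlGen q d l)).toAddSubgroup := by
  apply le_antisymm
  · rw [AddSubgroup.closure_le]
    rintro x ⟨v, i, j, hij, rfl⟩
    exact Ideal.mul_mem_left _ _ (Ideal.subset_span ⟨i, j, hij, rfl⟩)
  · intro x hx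
    rw [Submodule.mem_toAddSubgroup] at hx
    induction hx using Submodule.span_induction with
    | mem y hy =>
      obtain ⟨i, j, hij, rfl⟩ := hy
      refine AddSubgroup.subset_closure ⟨0, i, j, hij, ?_⟩
      rw [← AddMonoidAlgebra.one_def, one_mul]
    | zero => exact AddSubgroup.zero_mem _
    | add y z hy hz ihy ihz => exact AddSubgroup.add_mem _ ihy ihz
    | smul a y hy ihy =>
      rw [smul_eq_mul]
      exact mul_mem_closure_dlGenV q d l a y ihy

end DLAux4

/-- Proposition 2.2 / Section 3: `π` is surjective, and its kernel `K` is generated as an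
additive group by the elements `x^v · ((l_j - l_i) + x_i - x_j)` for `v ∈ ℤ^(d-1)` and
`i ≠ j`; equivalently `K` is the ideal generated by the elements `(l_j - l_i) + x_i - x_j`
for `i ≠ j`. -/
theorem statement1 (q d : ℕ) (hq : 2 ≤ q) (hd : 3 ≤ d) (l : Fin (d-1) → ZMod q)
    (hl0 : l ⟨0, by omega⟩ = 0)
    (hl : ∀ i j : Fin (d-1), i ≠ j → IsUnit (l i - l j)) :
    Function.Surjective (dlPi q d l) ∧
    (RingHom.ker (dlPi q d l)).toAddSubgroup
      = AddSubgroup.closure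
          {x : dlLaurent q d | ∃ (v : Fin (d-1) → ℤ) (i j : Fin (d-1)), i ≠ j ∧
            x = AddMonoidAlgebra.single v 1 *
              (AddMonoidAlgebra.single 0 (l j - l i)
                + AddMonoidAlgebra.single (Pi.single i 1) 1
                - AddMonoidAlgebra.single (Pi.single j 1) 1)} ∧
    RingHom.ker (dlPi q d l)
      = Ideal.span
          {x : dlLaurent q d | ∃ i j : Fin (d-1), i ≠ j ∧
            x = AddMonoidAlgebra.single 0 (l j - l i)
                + AddMonoidAlgebra.single (Pi.single i 1) 1
                - AddMonoidAlgebra.single (Pi.single j 1) 1} := by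
  have hker : RingHom.ker (dlPi q d l) = Ideal.span (dlGen q d l) :=
    le_antisymm (ker_le_span_dlGen q d l ⟨0, by omega⟩ hl0) (span_dlGen_le_ker q d l)
  refine ⟨dlPi_surj q d l ⟨0, by omega⟩ hl0, ?_, hker⟩
  show (RingHom.ker (dlPi q d l)).toAddSubgroup = AddSubgroup.closure (dlGenV q d l)
  rw [hker, closure_dlGenV_eq_span]
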